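/- Let λ be a partition with at most n parts and μ ∈ ℤⁿ with μ ≺ λ. Then the inner product ⟨E_λ^{(n)}(z;c,d), z^μ⟩₀ = ∫_T E_λ^{(n)}(z;c,d) z^{−μ} Δ_K^{(n)}(z;t;a,b,c,d) dT vanishes. -/

import Mathlib

open Finset MeasureTheory

/-- The decreasing rearrangement of the absolute values of the entries of `μ` (`μ⁺`). -/
noncomputable def dplus {n : ℕ} (μ : Fin n → ℤ) : Fin n → ℤ :=
  fun i => -(((fun j => -|μ j|) ∘ Tuple.sort fun j => -|μ j|) i)

/-- Dominance order on `ℤⁿ`: all partial sums of `μ` are at most those of `lam`. -/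
def domLE {n : ℕ} (μ lam : Fin n → ℤ) : Prop :=
  ∀ k : ℕ,
    ∑ i ∈ Finset.univ.filter (fun i : Fin n => (i : ℕ) < k), μ i ≤
    ∑ i ∈ Finset.univ.filter (fun i : Fin n => (i : ℕ) < k), lam i

/-- The order `≺` on compositions. -/
noncomputable def precOrd {n : ℕ} (μ lam : Fin n → ℤ) : Prop :=
  μ ≠ lam ∧
    ((domLE (dplus μ) (dplus lam) ∧ dplus μ ≠ dplus lam) ∨
      (dplus μ = dplus lam ∧ domLE μ lam))

/-- `lam` is a partition: weakly decreasing with nonnegative entries. -/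
def isPartition {n : ℕ} (lam : Fin n → ℤ) : Prop :=
  (∀ i, 0 ≤ lam i) ∧ ∀ i j : Fin n, i ≤ j → lam j ≤ lam i

/-- Normalized integral over the `n`-torus against Haar measure. -/
noncomputable def torusInt (n : ℕ) (f : (Fin n → ℂ) → ℂ) : ℂ :=
  ((2 * Real.pi : ℂ))⁻¹ ^ n *
    ∫ θ : Fin n → ℝ in Set.univ.pi fun _ : Fin n => Set.Ioc (0 : ℝ) (2 * Real.pi),
      f fun i => Complex.exp (Complex.I * θ i)

/-- The `q = 0` nonsymmetric Koornwinder density `Δ_K^{(n)}(z;t;a,b,c,d)`. -/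
noncomputable def nsDensity (n : ℕ) (t a b c d : ℂ) (z : Fin n → ℂ) : ℂ :=
  (∏ i : Fin n, (1 - z i ^ 2) /
      ((1 - a * z i) * (1 - b * z i) * (1 - c * z i) * (1 - d * z i) *
        (1 - c * (z i)⁻¹) * (1 - d * (z i)⁻¹))) *
  ∏ i : Fin n, ∏ j : Fin n,
    if i < j then
      ((1 - z i * z j) * (1 - z i * (z j)⁻¹)) /
        ((1 - t * z i * z j) * (1 - t * z i * (z j)⁻¹))
    else 1

/-- The nonsymmetric polynomial `E_λ^{(n)}(z;c,d) = ∏_{λ_i>0} z_i^{λ_i}(1−cz_i⁻¹)(1−dz_i⁻¹)`. -/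
noncomputable def Epoly (n : ℕ) (lam : Fin n → ℤ) (c d : ℂ) (z : Fin n → ℂ) : ℂ :=
  ∏ i ∈ Finset.univ.filter fun i : Fin n => 0 < lam i,
    z i ^ lam i * (1 - c * (z i)⁻¹) * (1 - d * (z i)⁻¹)

namespace EOrth

variable {n : ℕ}

/-- Partial sums of the first `k` entries. -/
def PS (ν : Fin n → ℤ) (k : ℕ) : ℤ :=
  ∑ i ∈ Finset.univ.filter (fun i : Fin n => (i : ℕ) < k), ν i

/-- The set of "good" exponents. -/
def Sset (lam : Fin n → ℤ) : Set (Fin n → ℤ) :=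
  {ν | ∀ j : Fin n, 0 < lam j → 0 ≤ PS ν ((j : ℕ) + 1)}

lemma PS_add (ν κ : Fin n → ℤ) (k : ℕ) :
    PS (fun i => ν i + κ i) k = PS ν k + PS κ k := by
  simp [PS, Finset.sum_add_distrib]

lemma PS_sub (ν κ : Fin n → ℤ) (k : ℕ) :
    PS (fun i => ν i - κ i) k = PS ν k - PS κ k := by
  simp [PS, Finset.sum_sub_distrib]

lemma PS_nonneg (ν : Fin n → ℤ) (h : ∀ i, 0 ≤ ν i) (k : ℕ) : 0 ≤ PS ν k :=
  Finset.sum_nonneg fun i _ => h i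

lemma PS_mono (ν : Fin n → ℤ) (h : ∀ i, 0 ≤ ν i) {k l : ℕ} (hkl : k ≤ l) :
    PS ν k ≤ PS ν l := by
  apply Finset.sum_le_sum_of_subset_of_nonneg
  · intro i hi
    simp only [Finset.mem_filter, Finset.mem_univ, true_and] at hi ⊢
    omega
  · exact fun i _ _ => h i

lemma PS_le (ν κ : Fin n → ℤ) (h : ∀ i, ν i ≤ κ i) (k : ℕ) : PS ν k ≤ PS κ k :=
  Finset.sum_le_sum fun i _ => h i

lemma PS_succ (ν : Fin n → ℤ) (k : ℕ) (hk : k < n) :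
    PS ν (k + 1) = PS ν k + ν ⟨k, hk⟩ := by
  have h : Finset.univ.filter (fun i : Fin n => (i : ℕ) < k + 1) =
      insert ⟨k, hk⟩ (Finset.univ.filter (fun i : Fin n => (i : ℕ) < k)) := by
    ext i
    simp only [Finset.mem_filter, Finset.mem_univ, true_and, Finset.mem_insert]
    constructor
    · intro h
      rcases Nat.lt_succ_iff_lt_or_eq.mp h with h | h
      · exact Or.inr h
      · exact Or.inl (Fin.ext h)
    · rintro (rfl | h)
      · exact Nat.lt_succ_self _
      · exact Nat.lt_succ_of_lt h
  rw [PS, PS, h, Finset.sum_insert (by simp)]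
  ring

lemma PS_single (i : Fin n) (x : ℤ) (k : ℕ) :
    PS (fun j => if j = i then x else 0) k = if (i : ℕ) < k then x else 0 := by
  rw [PS, Finset.sum_ite_eq' _ i (fun _ => x)]
  simp

lemma zero_mem_Sset (lam : Fin n → ℤ) : (0 : Fin n → ℤ) ∈ Sset lam := by
  intro j _
  simp [PS]

lemma add_mem_Sset {lam ν κ : Fin n → ℤ} (hν : ν ∈ Sset lam) (hκ : κ ∈ Sset lam) :
    (fun i => ν i + κ i) ∈ Sset lam := by
  intro j hj
  rw [PS_add]
  exact add_nonneg (hν j hj) (hκ j hj)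

lemma single_mem_Sset (lam : Fin n → ℤ) (i : Fin n) (x : ℤ) (hx : 0 ≤ x) :
    (fun j => if j = i then x else 0) ∈ Sset lam := by
  intro j _
  rw [PS_single]
  split <;> simp [hx]

lemma neg_single_mem_Sset {lam : Fin n → ℤ} (hlam : isPartition lam) (i : Fin n)
    (hi : ¬ 0 < lam i) (x : ℤ) :
    (fun j => if j = i then -x else 0) ∈ Sset lam := by
  intro j hj
  rw [PS_single]
  have h : ¬ (i : ℕ) < (j : ℕ) + 1 := by
    intro h
    have hij : i ≤ j := by
      rw [Fin.le_def]; omega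
    exact hi (lt_of_lt_of_le hj (hlam.2 i j hij))
  simp [h]

lemma pair_mem_Sset (lam : Fin n → ℤ) (i j : Fin n) (hij : i < j) (x : ℤ) (hx : 0 ≤ x) :
    (fun m => (if m = i then x else 0) + (if m = j then -x else 0)) ∈ Sset lam := by
  intro m _
  rw [PS_add, PS_single, PS_single]
  have hij' : (i : ℕ) < (j : ℕ) := hij
  split <;> split <;> omega

/-! ### Sorting facts -/

lemma dplus_apply (μ : Fin n → ℤ) (i : Fin n) :
    dplus μ i = |μ (Tuple.sort (fun j => -|μ j|) i)| := by
  simp [dplus]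

lemma dplus_nonneg (μ : Fin n → ℤ) (i : Fin n) : 0 ≤ dplus μ i := by
  rw [dplus_apply]; exact abs_nonneg _

lemma dplus_antitone (μ : Fin n → ℤ) : Antitone (dplus μ) := by
  intro i j hij
  have h := Tuple.monotone_sort (fun j => -|μ j|) hij
  simp only [Function.comp_apply] at h
  simp only [dplus, Function.comp_apply]
  omega

lemma dplus_sum (μ : Fin n → ℤ) : ∑ i, dplus μ i = ∑ i, |μ i| := by
  have h : ∑ i, dplus μ i = ∑ i, |μ (Tuple.sort (fun j => -|μ j|) i)| :=
    Finset.sum_congr rfl fun i _ => dplus_apply μ i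
  rw [h, Equiv.sum_comp (Tuple.sort (fun j => -|μ j|)) (fun i => |μ i|)]

lemma dplus_of_partition (lam : Fin n → ℤ) (h : isPartition lam) : dplus lam = lam := by
  have hmono : Monotone (fun j : Fin n => -|lam j|) := by
    intro i j hij
    have h1 := h.2 i j hij
    have h2 := h.1 i
    have h3 := h.1 j
    simp only [neg_le_neg_iff]
    rw [abs_of_nonneg h2, abs_of_nonneg h3]
    exact h1
  have hsort : Tuple.sort (fun j : Fin n => -|lam j|) = Equiv.refl _ :=
    Tuple.sort_eq_refl_iff_monotone.mpr hmono
  funext i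
  simp only [dplus, hsort, Function.comp_apply, Equiv.refl_apply, neg_neg]
  exact abs_of_nonneg (h.1 i)

lemma strictMono_le_val {k : ℕ} (f : Fin k → Fin n) (hf : StrictMono f) (m : Fin k) :
    (m : ℕ) ≤ (f m : ℕ) := by
  obtain ⟨N, hN⟩ : ∃ N, (m : ℕ) = N := ⟨_, rfl⟩
  induction N generalizing m with
  | zero => omega
  | succ N ih =>
      have hNk : N < k := by omega
      have hlt : (⟨N, hNk⟩ : Fin k) < m := by rw [Fin.lt_def]; simp; omega
      have h1 := hf hlt
      have h2 := ih ⟨N, hNk⟩ rfl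
      rw [Fin.lt_def] at h1
      simp at h2
      omega

lemma sum_le_PS_of_antitone (w : Fin n → ℤ) (hw : Antitone w) (hnn : ∀ i, 0 ≤ w i)
    (T : Finset (Fin n)) : ∑ i ∈ T, w i ≤ PS w T.card := by
  set k := T.card with hk
  have hkn : k ≤ n := by
    rw [hk]
    simpa using Finset.card_le_card (Finset.subset_univ T)
  have himg : Finset.image (T.orderEmbOfFin hk.symm) Finset.univ = T := by
    ext x
    simp only [Finset.mem_image, Finset.mem_univ, true_and]
    constructor
    · rintro ⟨m, rfl⟩
      exact Finset.orderEmbOfFin_mem T hk.symm m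
    · intro hx
      have hx' : x ∈ Set.range (T.orderEmbOfFin hk.symm) := by
        rw [Finset.range_orderEmbOfFin]
        exact hx
      exact hx'
  have hT : ∑ i ∈ T, w i = ∑ m : Fin k, w (T.orderEmbOfFin hk.symm m) := by
    have h := Finset.sum_image (f := w) (g := (T.orderEmbOfFin hk.symm : Fin k → Fin n))
      (s := Finset.univ) (fun s _ r _ h => (T.orderEmbOfFin hk.symm).injective h)
    rw [himg] at h
    exact h
  rw [hT]
  have hub : ∀ m : Fin k, w (T.orderEmbOfFin hk.symm m) ≤
      w ⟨(m : ℕ), lt_of_lt_of_le m.2 hkn⟩ := by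
    intro m
    apply hw
    rw [Fin.le_def]
    exact strictMono_le_val _ (Finset.orderEmbOfFin T hk.symm).strictMono m
  calc ∑ m : Fin k, w (T.orderEmbOfFin hk.symm m)
      ≤ ∑ m : Fin k, w ⟨(m : ℕ), lt_of_lt_of_le m.2 hkn⟩ :=
        Finset.sum_le_sum fun m _ => hub m
    _ = PS w k := by
        rw [PS]
        have hset : Finset.univ.filter (fun i : Fin n => (i : ℕ) < k) =
            Finset.image (Fin.castLE hkn) Finset.univ := by
          ext i
          simp only [Finset.mem_filter, Finset.mem_univ, true_and, Finset.mem_image]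
          constructor
          · intro hi
            exact ⟨⟨(i : ℕ), hi⟩, rfl⟩
          · rintro ⟨m, rfl⟩
            exact m.2
        rw [hset, Finset.sum_image (fun s _ r _ h => Fin.castLE_injective hkn h)]
        apply Finset.sum_congr rfl
        intro m _
        congr 1

/-- Sum of `|μ|` over an initial segment is dominated by partial sums of `dplus μ`. -/
lemma PS_abs_le_PS_dplus (μ : Fin n → ℤ) (k : ℕ) :
    PS (fun i => |μ i|) k ≤ PS (dplus μ) k := by
  set σ := Tuple.sort (fun j => -|μ j|) with hσ
  set F := Finset.univ.filter (fun i : Fin n => (i : ℕ) < k) with hF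
  have h1 : PS (fun i => |μ i|) k = ∑ i ∈ F, |μ i| := rfl
  have h2 : ∀ i : Fin n, |μ i| = dplus μ (σ.symm i) := by
    intro i
    rw [dplus_apply]
    congr 1
    rw [Equiv.apply_symm_apply]
  have h3 : ∑ i ∈ F, |μ i| = ∑ j ∈ F.image σ.symm, dplus μ j := by
    rw [Finset.sum_image (fun s _ r _ h => σ.symm.injective h)]
    exact Finset.sum_congr rfl fun i _ => h2 i
  have h4 : (F.image σ.symm).card = F.card :=
    Finset.card_image_of_injective _ σ.symm.injective
  have h5 : F.card ≤ k := by
    have : F ⊆ Finset.univ.filter (fun i : Fin n => (i : ℕ) < k) := le_refl _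
    calc F.card = (F.image (fun i : Fin n => (i : ℕ))).card :=
          (Finset.card_image_of_injective _ Fin.val_injective).symm
      _ ≤ (Finset.range k).card := by
          apply Finset.card_le_card
          intro x hx
          simp only [Finset.mem_image] at hx
          obtain ⟨i, hi, rfl⟩ := hx
          rw [hF] at hi
          simp only [Finset.mem_filter] at hi
          simpa using hi.2
      _ = k := Finset.card_range k
  calc PS (fun i => |μ i|) k = ∑ j ∈ F.image σ.symm, dplus μ j := by rw [h1, h3]
    _ ≤ PS (dplus μ) (F.image σ.symm).card :=
        sum_le_PS_of_antitone _ (dplus_antitone μ) (dplus_nonneg μ) _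
    _ ≤ PS (dplus μ) k := PS_mono _ (dplus_nonneg μ) (by rw [h4]; exact h5)

/-- Key lemma 1: partial sums of `lam` are dominated by those of `dplus μ`. -/
lemma PS_lam_le_PS_dplus (lam μ : Fin n → ℤ) (hlam : isPartition lam)
    (hS : (fun i => μ i - lam i) ∈ Sset lam) (k : ℕ) :
    PS lam k ≤ PS (dplus μ) k := by
  by_cases hne : (Finset.univ.filter (fun i : Fin n => (i : ℕ) < k ∧ 0 < lam i)).Nonempty
  · set F := Finset.univ.filter (fun i : Fin n => (i : ℕ) < k ∧ 0 < lam i) with hF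
    set j := F.max' hne with hj
    have hjF : j ∈ F := F.max'_mem hne
    rw [hF, Finset.mem_filter] at hjF
    obtain ⟨-, hjk, hjpos⟩ := hjF
    have hstep1 : PS lam k = PS lam ((j : ℕ) + 1) := by
      rw [PS, PS]
      symm
      apply Finset.sum_subset
      · intro i hi
        simp only [Finset.mem_filter, Finset.mem_univ, true_and] at hi ⊢
        omega
      · intro i hi hni
        simp only [Finset.mem_filter, Finset.mem_univ, true_and] at hi hni
        by_contra hne0
        have hpos : 0 < lam i := lt_of_le_of_ne (hlam.1 i) (Ne.symm hne0)
        have hiF : i ∈ F := by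
          rw [hF, Finset.mem_filter]
          exact ⟨Finset.mem_univ _, hi, hpos⟩
        have := F.le_max' i hiF
        rw [← hj] at this
        have : (i : ℕ) ≤ (j : ℕ) := this
        omega
    have hstep2 : PS lam ((j : ℕ) + 1) ≤ PS μ ((j : ℕ) + 1) := by
      have h := hS j hjpos
      rw [PS_sub] at h
      omega
    have hstep3 : PS μ ((j : ℕ) + 1) ≤ PS (fun i => |μ i|) ((j : ℕ) + 1) :=
      PS_le _ _ (fun i => le_abs_self _) _
    have hstep4 : PS (fun i => |μ i|) ((j : ℕ) + 1) ≤ PS (dplus μ) ((j : ℕ) + 1) :=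
      PS_abs_le_PS_dplus μ _
    have hstep5 : PS (dplus μ) ((j : ℕ) + 1) ≤ PS (dplus μ) k :=
      PS_mono _ (dplus_nonneg μ) (by omega)
    omega
  · have hzero : PS lam k = 0 := by
      rw [PS]
      apply Finset.sum_eq_zero
      intro i hi
      simp only [Finset.mem_filter, Finset.mem_univ, true_and] at hi
      by_contra hne0
      have hpos : 0 < lam i := lt_of_le_of_ne (hlam.1 i) (Ne.symm hne0)
      exact hne ⟨i, by simp [hi, hpos]⟩
    rw [hzero]
    exact PS_nonneg _ (dplus_nonneg μ) k

/-- The main combinatorial lemma: `μ ≺ lam` implies `μ - lam ∉ Sset lam`. -/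
lemma not_mem_Sset (lam μ : Fin n → ℤ) (hlam : isPartition lam) (hprec : precOrd μ lam) :
    (fun i => μ i - lam i) ∉ Sset lam := by
  intro hS
  obtain ⟨hne, hcase⟩ := hprec
  have hdl : dplus lam = lam := dplus_of_partition lam hlam
  rcases hcase with ⟨hdom, hneq⟩ | ⟨heq, hdom⟩
  · apply hneq
    rw [hdl]
    have hPSeq : ∀ k, PS (dplus μ) k = PS lam k := by
      intro k
      refine le_antisymm ?_ (PS_lam_le_PS_dplus lam μ hlam hS k)
      have := hdom k
      rw [hdl] at this
      exact this
    funext i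
    have h1 := hPSeq ((i : ℕ) + 1)
    have h2 := hPSeq (i : ℕ)
    rw [PS_succ _ _ i.2, PS_succ _ _ i.2] at h1
    have hieq : (⟨(i : ℕ), i.2⟩ : Fin n) = i := by ext; rfl
    rw [hieq] at h1
    omega
  · apply hne
    have hz : ∀ j : Fin n, 0 < lam j → PS (fun i => μ i - lam i) ((j : ℕ) + 1) = 0 := by
      intro j hj
      have h1 := hS j hj
      have h2 := hdom ((j : ℕ) + 1)
      rw [PS_sub]
      rw [PS_sub] at h1
      exact le_antisymm (by change PS μ _ ≤ PS lam _ at h2; omega) h1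
    have hQ : ∀ j : Fin n, 0 < lam j → μ j = lam j := by
      intro j hj
      have h1 := hz j hj
      have h2 : PS (fun i => μ i - lam i) (j : ℕ) = 0 := by
        rcases Nat.eq_zero_or_pos (j : ℕ) with h0 | h0
        · rw [h0]
          simp [PS]
        · have hjn : (j : ℕ) - 1 < n := by omega
          set j' : Fin n := ⟨(j : ℕ) - 1, hjn⟩ with hj'
          have hj'j : j' ≤ j := by
            rw [Fin.le_def]
            show (j : ℕ) - 1 ≤ (j : ℕ)
            omega
          have hj'pos : 0 < lam j' := lt_of_lt_of_le hj (hlam.2 j' j hj'j)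
          have := hz j' hj'pos
          have hval : (j' : ℕ) + 1 = (j : ℕ) := by
            show (j : ℕ) - 1 + 1 = (j : ℕ)
            omega
          rw [hval] at this
          exact this
      rw [PS_succ _ _ j.2] at h1
      have hieq : (⟨(j : ℕ), j.2⟩ : Fin n) = j := by ext; rfl
      rw [hieq] at h1
      simp only [h2, zero_add] at h1
      omega
    have hsum : ∑ i, |μ i| = ∑ i, lam i := by
      rw [← dplus_sum, heq, hdl]
    have hsplit : ∑ i, (|μ i| - lam i) = 0 := by
      rw [Finset.sum_sub_distrib, hsum]
      ring
    have hterm : ∀ i : Fin n, 0 ≤ |μ i| - lam i := by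
      intro i
      by_cases hp : 0 < lam i
      · rw [hQ i hp, abs_of_nonneg (hlam.1 i)]
        omega
      · have : lam i = 0 := le_antisymm (not_lt.mp hp) (hlam.1 i)
        rw [this]
        simpa using abs_nonneg (μ i)
    have hall : ∀ i ∈ Finset.univ, |μ i| - lam i = 0 := by
      intro i _
      have := (Finset.sum_eq_zero_iff_of_nonneg (fun i _ => hterm i)).mp hsplit i
        (Finset.mem_univ i)
      exact this
    funext i
    by_cases hp : 0 < lam i
    · exact hQ i hp
    · have hl0 : lam i = 0 := le_antisymm (not_lt.mp hp) (hlam.1 i)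
      have := hall i (Finset.mem_univ i)
      rw [hl0] at this ⊢
      have h0 : |μ i| = 0 := by omega
      have h1 := abs_eq_zero.mp h0
      omega

/-! ### Analysis on the torus -/

noncomputable def zf (θ : Fin n → ℝ) (i : Fin n) : ℂ := Complex.exp (Complex.I * θ i)

noncomputable def M (ν : Fin n → ℤ) (θ : Fin n → ℝ) : ℂ := ∏ i, zf θ i ^ ν i

def box (n : ℕ) : Set (Fin n → ℝ) :=
  Set.univ.pi fun _ : Fin n => Set.Ioc (0 : ℝ) (2 * Real.pi)

lemma zf_ne (θ : Fin n → ℝ) (i : Fin n) : zf θ i ≠ 0 := Complex.exp_ne_zero _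

lemma norm_zf (θ : Fin n → ℝ) (i : Fin n) : ‖zf θ i‖ = 1 := by
  rw [zf, Complex.norm_exp]
  simp

lemma norm_M (ν : Fin n → ℤ) (θ : Fin n → ℝ) : ‖M ν θ‖ = 1 := by
  rw [M]
  rw [norm_prod]
  have h : ∀ i : Fin n, ‖zf θ i ^ ν i‖ = 1 := by
    intro i
    rw [norm_zpow, norm_zf, one_zpow]
  rw [Finset.prod_congr rfl fun i _ => h i, Finset.prod_const_one]

lemma continuous_zf (i : Fin n) : Continuous fun θ : Fin n → ℝ => zf θ i :=
  Complex.continuous_exp.comp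
    (continuous_const.mul (Complex.continuous_ofReal.comp (continuous_apply i)))

lemma continuous_M (ν : Fin n → ℤ) : Continuous (M ν) :=
  continuous_finset_prod _ fun i _ =>
    (continuous_zf i).zpow₀ (ν i) (fun θ => Or.inl (zf_ne θ i))

lemma M_mul (ν κ : Fin n → ℤ) (θ : Fin n → ℝ) :
    M (fun i => ν i + κ i) θ = M ν θ * M κ θ := by
  rw [M, M, M, ← Finset.prod_mul_distrib]
  exact Finset.prod_congr rfl fun i _ => zpow_add₀ (zf_ne θ i) _ _

lemma M_zero (θ : Fin n → ℝ) : M (0 : Fin n → ℤ) θ = 1 := by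
  simp [M]

lemma M_single (i : Fin n) (k : ℤ) (θ : Fin n → ℝ) :
    M (fun j => if j = i then k else 0) θ = zf θ i ^ k := by
  rw [M]
  have h : ∀ j : Fin n, zf θ j ^ (if j = i then k else 0) =
      if j = i then zf θ i ^ k else 1 := by
    intro j
    by_cases hj : j = i
    · subst hj; simp
    · simp [hj]
  rw [Finset.prod_congr rfl fun j _ => h j, Finset.prod_ite_eq' Finset.univ i
    (fun _ => zf θ i ^ k)]
  simp

lemma integral_Ioc_zpow (k : ℤ) (hk : k ≠ 0) :
    ∫ x in Set.Ioc (0 : ℝ) (2 * Real.pi), Complex.exp (Complex.I * x) ^ k = 0 := by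
  have h2π : (0 : ℝ) ≤ 2 * Real.pi := by positivity
  rw [← intervalIntegral.integral_of_le h2π]
  have hfun : ∀ x : ℝ, Complex.exp (Complex.I * x) ^ k =
      Complex.exp (((k : ℂ) * Complex.I) * x) := by
    intro x
    rw [← Complex.exp_int_mul]
    congr 1
    ring
  rw [intervalIntegral.integral_congr (fun x _ => hfun x)]
  rw [integral_exp_mul_complex (by simp [hk, Complex.I_ne_zero])]
  have h1 : Complex.exp ((k : ℂ) * Complex.I * (2 * Real.pi : ℝ)) = 1 := by
    rw [show (k : ℂ) * Complex.I * ((2 * Real.pi : ℝ) : ℂ) =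
        (k : ℤ) * (2 * (Real.pi : ℂ) * Complex.I) by push_cast; ring]
    exact Complex.exp_int_mul_two_pi_mul_I k
  rw [h1]
  simp

lemma measurableSet_box : MeasurableSet (box n) :=
  MeasurableSet.univ_pi fun _ => measurableSet_Ioc

lemma volume_box_lt_top : volume (box n) < ⊤ := by
  rw [box, volume_pi_pi]
  simp only [Real.volume_Ioc]
  exact ENNReal.prod_lt_top fun i _ => ENNReal.ofReal_lt_top

lemma integral_box_M (ν : Fin n → ℤ) (hν : ν ≠ 0) : ∫ θ in box n, M ν θ = 0 := by
  classical
  have key : ∫ θ in box n, M ν θ = ∏ i, ∫ x : ℝ,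
      (Set.Ioc (0 : ℝ) (2 * Real.pi)).indicator
        (fun x => Complex.exp (Complex.I * x) ^ ν i) x := by
    rw [← MeasureTheory.integral_indicator measurableSet_box]
    have h : (box n).indicator (M ν) = fun θ => ∏ i,
        (Set.Ioc (0 : ℝ) (2 * Real.pi)).indicator
          (fun x => Complex.exp (Complex.I * x) ^ ν i) (θ i) := by
      funext θ
      by_cases hθ : θ ∈ box n
      · rw [Set.indicator_of_mem hθ, M]
        apply Finset.prod_congr rfl
        intro i _
        rw [Set.indicator_of_mem (hθ i (Set.mem_univ i))]
        rfl
      · rw [Set.indicator_of_notMem hθ]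
        rw [box, Set.mem_pi] at hθ
        push_neg at hθ
        obtain ⟨i, -, hi⟩ := hθ
        symm
        apply Finset.prod_eq_zero (Finset.mem_univ i)
        rw [Set.indicator_of_notMem hi]
    rw [h, MeasureTheory.integral_fintype_prod_volume_eq_prod]
  rw [key]
  obtain ⟨i0, hi0⟩ := Function.ne_iff.mp hν
  apply Finset.prod_eq_zero (Finset.mem_univ i0)
  rw [MeasureTheory.integral_indicator measurableSet_Ioc]
  exact integral_Ioc_zpow _ (by simpa using hi0)

/-! ### The span of good monomials -/

def SGen (lam : Fin n → ℤ) : Set ((Fin n → ℝ) → ℂ) := {f | ∃ ν ∈ Sset lam, f = M ν}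

noncomputable def SSpan (lam : Fin n → ℤ) : Submodule ℂ ((Fin n → ℝ) → ℂ) :=
  Submodule.span ℂ (SGen lam)

lemma integrableOn_box {f : (Fin n → ℝ) → ℂ} (hf : Continuous f) :
    IntegrableOn f (box n) := by
  have hsub : box n ⊆ Set.univ.pi fun _ : Fin n => Set.Icc (0 : ℝ) (2 * Real.pi) :=
    Set.pi_mono fun i _ => Set.Ioc_subset_Icc_self
  have hcpt : IsCompact (Set.univ.pi fun _ : Fin n => Set.Icc (0 : ℝ) (2 * Real.pi)) :=
    isCompact_univ_pi fun _ => isCompact_Icc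
  exact (hf.continuousOn.integrableOn_compact hcpt).mono_set hsub

def CoefZero (lam : Fin n → ℤ) (f : (Fin n → ℝ) → ℂ) : Prop :=
  ∀ κ : Fin n → ℤ, κ ∉ Sset lam → ∫ θ in box n, f θ * M (fun i => -κ i) θ = 0

lemma span_props (lam : Fin n → ℤ) {p : (Fin n → ℝ) → ℂ} (hp : p ∈ SSpan lam) :
    Continuous p ∧ CoefZero lam p := by
  induction hp using Submodule.span_induction with
  | mem f hf =>
      obtain ⟨ν, hν, rfl⟩ := hf
      refine ⟨continuous_M ν, ?_⟩
      intro κ hκ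
      have h1 : (fun θ => M ν θ * M (fun i => -κ i) θ) = M (fun i => ν i + -κ i) := by
        funext θ
        rw [M_mul]
      rw [show (∫ θ in box n, M ν θ * M (fun i => -κ i) θ) =
        ∫ θ in box n, M (fun i => ν i + -κ i) θ by rw [← h1]]
      apply integral_box_M
      intro h0
      apply hκ
      have hνκ : ν = κ := by
        funext i
        have := congrFun h0 i
        simp at this
        omega
      rwa [← hνκ]
  | zero =>
      refine ⟨continuous_const.congr (by intro x; rfl), ?_⟩
      intro κ hκ
      simp
  | add f g hf hg ihf ihg =>
      refine ⟨ihf.1.add ihg.1, ?_⟩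
      intro κ hκ
      have h1 : (fun θ => (f + g) θ * M (fun i => -κ i) θ) =
          fun θ => f θ * M (fun i => -κ i) θ + g θ * M (fun i => -κ i) θ := by
        funext θ; simp [add_mul]
      rw [show (∫ θ in box n, (f + g) θ * M (fun i => -κ i) θ) =
        ∫ θ in box n, (f θ * M (fun i => -κ i) θ + g θ * M (fun i => -κ i) θ) by rw [← h1]]
      rw [MeasureTheory.integral_add
        (integrableOn_box (f := fun θ => f θ * M (fun i => -κ i) θ) (ihf.1.mul (continuous_M _)))
        (integrableOn_box (f := fun θ => g θ * M (fun i => -κ i) θ) (ihg.1.mul (continuous_M _)))]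
      rw [ihf.2 κ hκ, ihg.2 κ hκ, add_zero]
  | smul c f hf ihf =>
      refine ⟨ihf.1.const_smul c, ?_⟩
      intro κ hκ
      have h1 : (fun θ => (c • f) θ * M (fun i => -κ i) θ) =
          fun θ => c • (f θ * M (fun i => -κ i) θ) := by
        funext θ; simp [Pi.smul_apply, smul_eq_mul]; ring
      rw [show (∫ θ in box n, (c • f) θ * M (fun i => -κ i) θ) =
        ∫ θ in box n, c • (f θ * M (fun i => -κ i) θ) by rw [← h1]]
      rw [MeasureTheory.integral_smul, ihf.2 κ hκ, smul_zero]

lemma span_bound (lam : Fin n → ℤ) {p : (Fin n → ℝ) → ℂ} (hp : p ∈ SSpan lam) :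
    ∃ C : ℝ, 0 ≤ C ∧ ∀ θ, ‖p θ‖ ≤ C := by
  induction hp using Submodule.span_induction with
  | mem f hf =>
      obtain ⟨ν, hν, rfl⟩ := hf
      exact ⟨1, zero_le_one, fun θ => le_of_eq (norm_M ν θ)⟩
  | zero => exact ⟨0, le_refl _, fun θ => by simp⟩
  | add f g hf hg ihf ihg =>
      obtain ⟨C1, hC10, hC1⟩ := ihf
      obtain ⟨C2, hC20, hC2⟩ := ihg
      exact ⟨C1 + C2, by linarith, fun θ => by
        calc ‖(f + g) θ‖ = ‖f θ + g θ‖ := rfl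
          _ ≤ ‖f θ‖ + ‖g θ‖ := norm_add_le _ _
          _ ≤ C1 + C2 := add_le_add (hC1 θ) (hC2 θ)⟩
  | smul c f hf ihf =>
      obtain ⟨C, hC0, hC⟩ := ihf
      exact ⟨‖c‖ * C, mul_nonneg (norm_nonneg c) hC0, fun θ => by
        calc ‖(c • f) θ‖ = ‖c‖ * ‖f θ‖ := by simp [Pi.smul_apply]
          _ ≤ ‖c‖ * C := mul_le_mul_of_nonneg_left (hC θ) (norm_nonneg c)⟩

/-! ### Good functions -/

def Good (lam : Fin n → ℤ) (f : (Fin n → ℝ) → ℂ) : Prop :=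
  Continuous f ∧ ∀ ε : ℝ, 0 < ε → ∃ p ∈ SSpan lam, ∀ θ, ‖f θ - p θ‖ ≤ ε

lemma good_of_mem {lam : Fin n → ℤ} {p : (Fin n → ℝ) → ℂ} (hp : p ∈ SSpan lam) :
    Good lam p :=
  ⟨(span_props lam hp).1, fun ε hε => ⟨p, hp, fun θ => by simp [le_of_lt hε]⟩⟩

lemma good_one (lam : Fin n → ℤ) : Good lam (fun _ => (1 : ℂ)) := by
  have h : (fun _ : Fin n → ℝ => (1 : ℂ)) = M (0 : Fin n → ℤ) := by
    funext θ
    rw [M_zero]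
  rw [h]
  exact good_of_mem (Submodule.subset_span ⟨0, zero_mem_Sset lam, rfl⟩)

lemma mem_span_one_sub (lam : Fin n → ℤ) (α : ℂ) (ν : Fin n → ℤ) (hν : ν ∈ Sset lam) :
    (fun θ => 1 - α * M ν θ) ∈ SSpan lam := by
  have h : (fun θ => 1 - α * M ν θ) = M (0 : Fin n → ℤ) + (-α) • M ν := by
    funext θ
    simp only [Pi.add_apply, Pi.smul_apply, smul_eq_mul, M_zero]
    ring
  rw [h]
  exact Submodule.add_mem _ (Submodule.subset_span ⟨0, zero_mem_Sset lam, rfl⟩)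
    (Submodule.smul_mem _ _ (Submodule.subset_span ⟨ν, hν, rfl⟩))

lemma good_one_sub (lam : Fin n → ℤ) (α : ℂ) (ν : Fin n → ℤ) (hν : ν ∈ Sset lam) :
    Good lam (fun θ => 1 - α * M ν θ) :=
  good_of_mem (mem_span_one_sub lam α ν hν)

lemma span_mul_mem (lam : Fin n → ℤ) {p q : (Fin n → ℝ) → ℂ}
    (hp : p ∈ SSpan lam) (hq : q ∈ SSpan lam) :
    (fun θ => p θ * q θ) ∈ SSpan lam := by
  induction hp using Submodule.span_induction with
  | mem f hf =>
      induction hq using Submodule.span_induction with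
      | mem g hg =>
          obtain ⟨ν, hν, rfl⟩ := hf
          obtain ⟨κ, hκ, rfl⟩ := hg
          have h : (fun θ => M ν θ * M κ θ) = M (fun i => ν i + κ i) := by
            funext θ; rw [M_mul]
          rw [h]
          exact Submodule.subset_span ⟨_, add_mem_Sset hν hκ, rfl⟩
      | zero =>
          have h : (fun θ => f θ * (0 : (Fin n → ℝ) → ℂ) θ) = 0 := by
            funext θ; simp
          rw [h]; exact Submodule.zero_mem _
      | add g h hg hh ihg ihh =>
          have he : (fun θ => f θ * (g + h) θ) =
              (fun θ => f θ * g θ) + (fun θ => f θ * h θ) := by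
            funext θ; simp [mul_add]
          rw [he]; exact Submodule.add_mem _ ihg ihh
      | smul c g hg ihg =>
          have he : (fun θ => f θ * (c • g) θ) = c • (fun θ => f θ * g θ) := by
            funext θ; simp [Pi.smul_apply, smul_eq_mul]; ring
          rw [he]; exact Submodule.smul_mem _ _ ihg
  | zero =>
      have h : (fun θ => (0 : (Fin n → ℝ) → ℂ) θ * q θ) = 0 := by
        funext θ; simp
      rw [h]; exact Submodule.zero_mem _
  | add f g hf hg ihf ihg =>
      have he : (fun θ => (f + g) θ * q θ) =
          (fun θ => f θ * q θ) + (fun θ => g θ * q θ) := by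
        funext θ; simp [add_mul]
      rw [he]; exact Submodule.add_mem _ ihf ihg
  | smul c f hf ihf =>
      have he : (fun θ => (c • f) θ * q θ) = c • (fun θ => f θ * q θ) := by
        funext θ; simp [Pi.smul_apply, smul_eq_mul]; ring
      rw [he]; exact Submodule.smul_mem _ _ ihf

lemma good_bound {lam : Fin n → ℤ} {f : (Fin n → ℝ) → ℂ} (hf : Good lam f) :
    ∃ C : ℝ, 0 ≤ C ∧ ∀ θ, ‖f θ‖ ≤ C := by
  obtain ⟨p, hp, hap⟩ := hf.2 1 one_pos
  obtain ⟨C, hC0, hC⟩ := span_bound lam hp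
  refine ⟨C + 1, by linarith, fun θ => ?_⟩
  have h1 : f θ = f θ - p θ + p θ := by ring
  calc ‖f θ‖ = ‖f θ - p θ + p θ‖ := by rw [← h1]
    _ ≤ ‖f θ - p θ‖ + ‖p θ‖ := norm_add_le _ _
    _ ≤ 1 + C := add_le_add (hap θ) (hC θ)
    _ = C + 1 := by ring

lemma Good.mul {lam : Fin n → ℤ} {f g : (Fin n → ℝ) → ℂ}
    (hf : Good lam f) (hg : Good lam g) : Good lam (fun θ => f θ * g θ) := by
  obtain ⟨Cf, hCf0, hCf⟩ := good_bound hf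
  obtain ⟨Cg, hCg0, hCg⟩ := good_bound hg
  refine ⟨hf.1.mul hg.1, ?_⟩
  intro ε hε
  have hden : (0 : ℝ) < Cf + Cg + 2 := by linarith
  set δ := min 1 (ε / (Cf + Cg + 2)) with hδ
  have hδpos : 0 < δ := lt_min one_pos (div_pos hε hden)
  have hδ1 : δ ≤ 1 := min_le_left _ _
  have hδε : δ * (Cf + Cg + 2) ≤ ε := by
    rw [← le_div_iff₀ hden]
    exact min_le_right _ _
  obtain ⟨p, hp, hap⟩ := hf.2 δ hδpos
  obtain ⟨q, hq, haq⟩ := hg.2 δ hδpos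
  refine ⟨fun θ => p θ * q θ, span_mul_mem lam hp hq, fun θ => ?_⟩
  have hsplit : f θ * g θ - p θ * q θ = (f θ - p θ) * g θ + p θ * (g θ - q θ) := by ring
  have hpb : ‖p θ‖ ≤ Cf + 1 := by
    have h2 : p θ = f θ - (f θ - p θ) := by ring
    calc ‖p θ‖ = ‖f θ - (f θ - p θ)‖ := by rw [← h2]
      _ ≤ ‖f θ‖ + ‖f θ - p θ‖ := norm_sub_le _ _
      _ ≤ Cf + 1 := add_le_add (hCf θ) ((hap θ).trans hδ1)
  calc ‖f θ * g θ - p θ * q θ‖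
      = ‖(f θ - p θ) * g θ + p θ * (g θ - q θ)‖ := by rw [← hsplit]
    _ ≤ ‖(f θ - p θ) * g θ‖ + ‖p θ * (g θ - q θ)‖ := norm_add_le _ _
    _ = ‖f θ - p θ‖ * ‖g θ‖ + ‖p θ‖ * ‖g θ - q θ‖ := by rw [norm_mul, norm_mul]
    _ ≤ δ * Cg + (Cf + 1) * δ := by
        apply add_le_add
        · exact mul_le_mul (hap θ) (hCg θ) (norm_nonneg _) (le_of_lt hδpos)
        · exact mul_le_mul hpb (haq θ) (norm_nonneg _) (by linarith)
    _ ≤ δ * (Cf + Cg + 2) := by nlinarith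
    _ ≤ ε := hδε

lemma good_geom (lam : Fin n → ℤ) (α : ℂ) (ν : Fin n → ℤ) (hν : ν ∈ Sset lam)
    (hα : ‖α‖ < 1) : Good lam (fun θ => (1 - α * M ν θ)⁻¹) := by
  have hne : ∀ θ, 1 - α * M ν θ ≠ 0 := by
    intro θ h
    have h1 : α * M ν θ = 1 := by
      have := sub_eq_zero.mp h
      exact this.symm
    have h2 : ‖α * M ν θ‖ = 1 := by rw [h1, norm_one]
    rw [norm_mul, norm_M, mul_one] at h2
    rw [h2] at hα
    exact lt_irrefl _ hα
  refine ⟨(continuous_const.sub (continuous_const.mul (continuous_M ν))).inv₀ hne, ?_⟩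
  intro ε hε
  have h1α : (0 : ℝ) < 1 - ‖α‖ := by linarith
  obtain ⟨N, hN⟩ := exists_pow_lt_of_lt_one (mul_pos hε h1α) hα
  refine ⟨fun θ => ∑ k ∈ Finset.range N, α ^ k * M (fun i => (k : ℤ) * ν i) θ, ?_, ?_⟩
  · have hpi : (fun θ => ∑ k ∈ Finset.range N, α ^ k * M (fun i => (k : ℤ) * ν i) θ) =
        ∑ k ∈ Finset.range N, (α ^ k) • M (fun i => (k : ℤ) * ν i) := by
      funext θ
      rw [Finset.sum_apply]
      apply Finset.sum_congr rfl
      intro k _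
      simp [Pi.smul_apply, smul_eq_mul]
    rw [hpi]
    apply Submodule.sum_mem
    intro k _
    have hk : (fun i => (k : ℤ) * ν i) ∈ Sset lam := by
      intro j hj
      have h : PS (fun i => (k : ℤ) * ν i) ((j : ℕ) + 1) = (k : ℤ) * PS ν ((j : ℕ) + 1) := by
        rw [PS, PS, Finset.mul_sum]
      rw [h]
      exact mul_nonneg (Int.natCast_nonneg k) (hν j hj)
    exact Submodule.smul_mem _ _ (Submodule.subset_span ⟨_, hk, rfl⟩)
  · intro θ
    show ‖(1 - α * M ν θ)⁻¹ - ∑ k ∈ Finset.range N, α ^ k * M (fun i => (k : ℤ) * ν i) θ‖ ≤ ε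
    have hnu : ‖α * M ν θ‖ = ‖α‖ := by rw [norm_mul, norm_M, mul_one]
    have hMk : ∀ k : ℕ, M (fun i => (k : ℤ) * ν i) θ = M ν θ ^ k := by
      intro k
      rw [M, M, ← Finset.prod_pow]
      apply Finset.prod_congr rfl
      intro i _
      rw [← zpow_natCast (zf θ i ^ ν i) k, ← zpow_mul]
      congr 1
      ring
    have hsum : ∑ k ∈ Finset.range N, α ^ k * M (fun i => (k : ℤ) * ν i) θ =
        ∑ k ∈ Finset.range N, (α * M ν θ) ^ k := by
      apply Finset.sum_congr rfl
      intro k _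
      rw [hMk k, mul_pow]
    rw [hsum]
    set u := α * M ν θ with hu
    have hu1 : u ≠ 1 := by
      intro h
      rw [h, norm_one] at hnu
      rw [← hnu] at hα
      exact lt_irrefl _ hα
    rw [geom_sum_eq hu1]
    have h1u : (1 : ℂ) - u ≠ 0 := hne θ
    have hu1' : u - 1 ≠ 0 := fun h => h1u (by rw [← neg_sub]; simp [sub_eq_zero.mp h])
    have key : (1 - u)⁻¹ - (u ^ N - 1) / (u - 1) = u ^ N / (1 - u) := by
      field_simp
      ring
    rw [key, norm_div, norm_pow, hnu]
    have hden : 1 - ‖α‖ ≤ ‖1 - u‖ := by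
      calc 1 - ‖α‖ = ‖(1 : ℂ)‖ - ‖u‖ := by rw [norm_one, hnu]
        _ ≤ ‖1 - u‖ := norm_sub_norm_le _ _
    have h3 : ‖α‖ ^ N / ‖1 - u‖ ≤ ‖α‖ ^ N / (1 - ‖α‖) :=
      div_le_div_of_nonneg_left (pow_nonneg (norm_nonneg α) N) h1α hden
    have h4 : ‖α‖ ^ N / (1 - ‖α‖) ≤ ε := by
      rw [div_le_iff₀ h1α]
      nlinarith
    linarith

lemma Good.coefZero {lam : Fin n → ℤ} {f : (Fin n → ℝ) → ℂ} (hf : Good lam f) :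
    CoefZero lam f := by
  intro κ hκ
  set J := ∫ θ in box n, f θ * M (fun i => -κ i) θ with hJ
  have hbound : ∀ ε : ℝ, 0 < ε → ‖J‖ ≤ ε * (volume (box n)).toReal := by
    intro ε hε
    obtain ⟨p, hp, hap⟩ := hf.2 ε hε
    obtain ⟨hpc, hpz⟩ := span_props lam hp
    have h1 : (fun θ => f θ * M (fun i => -κ i) θ) =
        fun θ => (f θ - p θ) * M (fun i => -κ i) θ + p θ * M (fun i => -κ i) θ := by
      funext θ; ring
    have hint1 : IntegrableOn (fun θ => (f θ - p θ) * M (fun i => -κ i) θ) (box n) :=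
      integrableOn_box ((hf.1.sub hpc).mul (continuous_M _))
    have hint2 : IntegrableOn (fun θ => p θ * M (fun i => -κ i) θ) (box n) :=
      integrableOn_box (hpc.mul (continuous_M _))
    have h2 : J = ∫ θ in box n,
        ((f θ - p θ) * M (fun i => -κ i) θ + p θ * M (fun i => -κ i) θ) := by
      rw [hJ, h1]
    rw [h2, MeasureTheory.integral_add hint1 hint2, hpz κ hκ, add_zero]
    apply norm_setIntegral_le_of_norm_le_const volume_box_lt_top
    intro θ _
    rw [norm_mul, norm_M, mul_one]
    exact hap θ
  by_contra hJ0
  have h0 : 0 < ‖J‖ := norm_pos_iff.mpr hJ0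
  set V := (volume (box n)).toReal with hV
  have hV0 : 0 ≤ V := ENNReal.toReal_nonneg
  have hb := hbound (‖J‖ / (2 * (V + 1))) (by positivity)
  have h2 : (0 : ℝ) < 2 * (V + 1) := by linarith
  rw [div_mul_eq_mul_div, le_div_iff₀ h2] at hb
  nlinarith

lemma good_prod {lam : Fin n → ℤ} {ι : Type*} (s : Finset ι) (f : ι → (Fin n → ℝ) → ℂ)
    (h : ∀ i ∈ s, Good lam (f i)) : Good lam (fun θ => ∏ i ∈ s, f i θ) := by
  classical
  induction s using Finset.cons_induction with
  | empty =>
      have he : (fun θ : Fin n → ℝ => ∏ i ∈ (∅ : Finset ι), f i θ) = fun _ => (1 : ℂ) := by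
        funext θ; simp
      rw [he]
      exact good_one lam
  | cons a s ha ih =>
      have he : (fun θ => ∏ i ∈ Finset.cons a s ha, f i θ) =
          fun θ => f a θ * ∏ i ∈ s, f i θ := by
        funext θ; rw [Finset.prod_cons]
      rw [he]
      exact (h a (Finset.mem_cons_self a s)).mul
        (ih fun i hi => h i (Finset.mem_cons_of_mem hi))

/-! ### The good density function -/

lemma one_sub_ne {w : ℂ} (hw : ‖w‖ < 1) : (1 : ℂ) - w ≠ 0 := by
  intro h
  rw [sub_eq_zero] at h
  rw [← h] at hw
  simp at hw

noncomputable def Gfun (lam : Fin n → ℤ) (a b c d t : ℂ) (θ : Fin n → ℝ) : ℂ :=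
  (∏ i : Fin n, (1 - zf θ i ^ 2) * (1 - a * zf θ i)⁻¹ * (1 - b * zf θ i)⁻¹ *
      (1 - c * zf θ i)⁻¹ * (1 - d * zf θ i)⁻¹) *
  (∏ i ∈ Finset.univ.filter (fun i : Fin n => ¬ 0 < lam i),
      (1 - c * (zf θ i)⁻¹)⁻¹ * (1 - d * (zf θ i)⁻¹)⁻¹) *
  (∏ i : Fin n, ∏ j : Fin n, if i < j then
      ((1 - zf θ i * zf θ j) * (1 - zf θ i * (zf θ j)⁻¹)) /
        ((1 - t * zf θ i * zf θ j) * (1 - t * zf θ i * (zf θ j)⁻¹)) else 1)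

lemma good_sq (lam : Fin n → ℤ) (i : Fin n) : Good lam (fun θ => 1 - zf θ i ^ 2) := by
  have h := good_one_sub lam 1 (fun j => if j = i then (2 : ℤ) else 0)
    (single_mem_Sset lam i 2 (by norm_num))
  have he : (fun θ => 1 - (1 : ℂ) * M (fun j => if j = i then (2 : ℤ) else 0) θ) =
      fun θ => 1 - zf θ i ^ 2 := by
    funext θ
    rw [M_single, one_mul, show ((2 : ℤ)) = ((2 : ℕ) : ℤ) from rfl, zpow_natCast]
  rwa [he] at h

lemma good_lin (lam : Fin n → ℤ) (α : ℂ) (hα : ‖α‖ < 1) (i : Fin n) :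
    Good lam (fun θ => (1 - α * zf θ i)⁻¹) := by
  have h := good_geom lam α (fun j => if j = i then (1 : ℤ) else 0)
    (single_mem_Sset lam i 1 (by norm_num)) hα
  have he : (fun θ => (1 - α * M (fun j => if j = i then (1 : ℤ) else 0) θ)⁻¹) =
      fun θ => (1 - α * zf θ i)⁻¹ := by
    funext θ
    rw [M_single, zpow_one]
  rwa [he] at h

lemma good_lininv (lam : Fin n → ℤ) (hlam : isPartition lam) (α : ℂ) (hα : ‖α‖ < 1)
    (i : Fin n) (hi : ¬ 0 < lam i) :
    Good lam (fun θ => (1 - α * (zf θ i)⁻¹)⁻¹) := by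
  have h := good_geom lam α (fun j => if j = i then -(1 : ℤ) else 0)
    (neg_single_mem_Sset hlam i hi 1) hα
  have he : (fun θ => (1 - α * M (fun j => if j = i then -(1 : ℤ) else 0) θ)⁻¹) =
      fun θ => (1 - α * (zf θ i)⁻¹)⁻¹ := by
    funext θ
    rw [M_single, zpow_neg_one]
  rwa [he] at h

lemma good_cnum1 (lam : Fin n → ℤ) (i j : Fin n) :
    Good lam (fun θ => 1 - zf θ i * zf θ j) := by
  have hmem : (fun m => (if m = i then (1 : ℤ) else 0) + (if m = j then (1 : ℤ) else 0)) ∈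
      Sset lam :=
    add_mem_Sset (single_mem_Sset lam i 1 (by norm_num)) (single_mem_Sset lam j 1 (by norm_num))
  have h := good_one_sub lam 1 _ hmem
  have he : (fun θ => 1 - (1 : ℂ) *
      M (fun m => (if m = i then (1 : ℤ) else 0) + (if m = j then (1 : ℤ) else 0)) θ) =
      fun θ => 1 - zf θ i * zf θ j := by
    funext θ
    rw [M_mul, M_single, M_single, zpow_one, zpow_one, one_mul]
  rwa [he] at h

lemma good_cnum2 (lam : Fin n → ℤ) (i j : Fin n) (hij : i < j) :
    Good lam (fun θ => 1 - zf θ i * (zf θ j)⁻¹) := by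
  have hmem := pair_mem_Sset lam i j hij 1 (by norm_num)
  have h := good_one_sub lam 1 _ hmem
  have he : (fun θ => 1 - (1 : ℂ) *
      M (fun m => (if m = i then (1 : ℤ) else 0) + (if m = j then -(1 : ℤ) else 0)) θ) =
      fun θ => 1 - zf θ i * (zf θ j)⁻¹ := by
    funext θ
    rw [M_mul, M_single, M_single, zpow_one, zpow_neg_one, one_mul]
  rwa [he] at h

lemma good_cden1 (lam : Fin n → ℤ) (t : ℂ) (ht : ‖t‖ < 1) (i j : Fin n) :
    Good lam (fun θ => (1 - t * zf θ i * zf θ j)⁻¹) := by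
  have hmem : (fun m => (if m = i then (1 : ℤ) else 0) + (if m = j then (1 : ℤ) else 0)) ∈
      Sset lam :=
    add_mem_Sset (single_mem_Sset lam i 1 (by norm_num)) (single_mem_Sset lam j 1 (by norm_num))
  have h := good_geom lam t _ hmem ht
  have he : (fun θ => (1 - t *
      M (fun m => (if m = i then (1 : ℤ) else 0) + (if m = j then (1 : ℤ) else 0)) θ)⁻¹) =
      fun θ => (1 - t * zf θ i * zf θ j)⁻¹ := by
    funext θ
    rw [M_mul, M_single, M_single, zpow_one, zpow_one, mul_assoc]
  rwa [he] at h

lemma good_cden2 (lam : Fin n → ℤ) (t : ℂ) (ht : ‖t‖ < 1) (i j : Fin n) (hij : i < j) :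
    Good lam (fun θ => (1 - t * zf θ i * (zf θ j)⁻¹)⁻¹) := by
  have hmem := pair_mem_Sset lam i j hij 1 (by norm_num)
  have h := good_geom lam t _ hmem ht
  have he : (fun θ => (1 - t *
      M (fun m => (if m = i then (1 : ℤ) else 0) + (if m = j then -(1 : ℤ) else 0)) θ)⁻¹) =
      fun θ => (1 - t * zf θ i * (zf θ j)⁻¹)⁻¹ := by
    funext θ
    rw [M_mul, M_single, M_single, zpow_one, zpow_neg_one, mul_assoc]
  rwa [he] at h

lemma good_Gfun (lam : Fin n → ℤ) (a b c d t : ℂ) (hlam : isPartition lam)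
    (ha : ‖a‖ < 1) (hb : ‖b‖ < 1) (hc : ‖c‖ < 1) (hd : ‖d‖ < 1) (ht : ‖t‖ < 1) :
    Good lam (Gfun lam a b c d t) := by
  have h1 : Good lam (fun θ => ∏ i : Fin n, (1 - zf θ i ^ 2) * (1 - a * zf θ i)⁻¹ *
      (1 - b * zf θ i)⁻¹ * (1 - c * zf θ i)⁻¹ * (1 - d * zf θ i)⁻¹) := by
    apply good_prod
    intro i _
    exact ((((good_sq lam i).mul (good_lin lam a ha i)).mul (good_lin lam b hb i)).mul
      (good_lin lam c hc i)).mul (good_lin lam d hd i)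
  have h2 : Good lam (fun θ => ∏ i ∈ Finset.univ.filter (fun i : Fin n => ¬ 0 < lam i),
      (1 - c * (zf θ i)⁻¹)⁻¹ * (1 - d * (zf θ i)⁻¹)⁻¹) := by
    apply good_prod
    intro i hi
    rw [Finset.mem_filter] at hi
    exact (good_lininv lam hlam c hc i hi.2).mul (good_lininv lam hlam d hd i hi.2)
  have h3 : Good lam (fun θ => ∏ i : Fin n, ∏ j : Fin n, if i < j then
      ((1 - zf θ i * zf θ j) * (1 - zf θ i * (zf θ j)⁻¹)) /
        ((1 - t * zf θ i * zf θ j) * (1 - t * zf θ i * (zf θ j)⁻¹)) else 1) := by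
    apply good_prod
    intro i _
    apply good_prod
    intro j _
    by_cases hij : i < j
    · simp only [if_pos hij]
      have hg := ((good_cnum1 lam i j).mul (good_cden1 lam t ht i j)).mul
        ((good_cnum2 lam i j hij).mul (good_cden2 lam t ht i j hij))
      have he : (fun θ => (1 - zf θ i * zf θ j) * (1 - t * zf θ i * zf θ j)⁻¹ *
          ((1 - zf θ i * (zf θ j)⁻¹) * (1 - t * zf θ i * (zf θ j)⁻¹)⁻¹)) =
          fun θ => ((1 - zf θ i * zf θ j) * (1 - zf θ i * (zf θ j)⁻¹)) /
            ((1 - t * zf θ i * zf θ j) * (1 - t * zf θ i * (zf θ j)⁻¹)) := by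
        funext θ
        rw [div_eq_mul_inv, mul_inv]
        ring
      rwa [he] at hg
    · simp only [if_neg hij]
      exact good_one lam
  exact (h1.mul h2).mul h3

/-! ### The pointwise identity -/

lemma integrand_eq (lam μ : Fin n → ℤ) (hlam : isPartition lam) (a b c d t : ℂ)
    (ha : ‖a‖ < 1) (hb : ‖b‖ < 1) (hc : ‖c‖ < 1) (hd : ‖d‖ < 1) (ht : ‖t‖ < 1)
    (θ : Fin n → ℝ) :
    Epoly n lam c d (zf θ) * (∏ i : Fin n, zf θ i ^ (-μ i)) *
        nsDensity n t a b c d (zf θ) =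
      Gfun lam a b c d t θ * M (fun i => -(μ i - lam i)) θ := by
  classical
  set z := zf θ with hzdef
  have hz : ∀ i, z i ≠ 0 := fun i => zf_ne θ i
  have hnz : ∀ i, ‖z i‖ = 1 := fun i => norm_zf θ i
  have hnormmul : ∀ (w : ℂ) (i : Fin n), ‖w * z i‖ = ‖w‖ := by
    intro w i; rw [norm_mul, hnz, mul_one]
  have hnorminv : ∀ (w : ℂ) (i : Fin n), ‖w * (z i)⁻¹‖ = ‖w‖ := by
    intro w i; rw [norm_mul, norm_inv, hnz, inv_one, mul_one]
  have hA : ∀ i, 1 - a * z i ≠ 0 := fun i => one_sub_ne (by rw [hnormmul]; exact ha)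
  have hB : ∀ i, 1 - b * z i ≠ 0 := fun i => one_sub_ne (by rw [hnormmul]; exact hb)
  have hC : ∀ i, 1 - c * z i ≠ 0 := fun i => one_sub_ne (by rw [hnormmul]; exact hc)
  have hD : ∀ i, 1 - d * z i ≠ 0 := fun i => one_sub_ne (by rw [hnormmul]; exact hd)
  have hC' : ∀ i, 1 - c * (z i)⁻¹ ≠ 0 := fun i => one_sub_ne (by rw [hnorminv]; exact hc)
  have hD' : ∀ i, 1 - d * (z i)⁻¹ ≠ 0 := fun i => one_sub_ne (by rw [hnorminv]; exact hd)
  have key : ∀ i : Fin n,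
      (if 0 < lam i then z i ^ lam i * (1 - c * (z i)⁻¹) * (1 - d * (z i)⁻¹) else 1) *
        ((1 - z i ^ 2) / ((1 - a * z i) * (1 - b * z i) * (1 - c * z i) * (1 - d * z i) *
          (1 - c * (z i)⁻¹) * (1 - d * (z i)⁻¹))) =
      z i ^ lam i *
        ((1 - z i ^ 2) * (1 - a * z i)⁻¹ * (1 - b * z i)⁻¹ * (1 - c * z i)⁻¹ *
          (1 - d * z i)⁻¹) *
        (if ¬ 0 < lam i then (1 - c * (z i)⁻¹)⁻¹ * (1 - d * (z i)⁻¹)⁻¹ else 1) := by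
    intro i
    have e1 : (1 - c * (z i)⁻¹) * (1 - c * (z i)⁻¹)⁻¹ = 1 := mul_inv_cancel₀ (hC' i)
    have e2 : (1 - d * (z i)⁻¹) * (1 - d * (z i)⁻¹)⁻¹ = 1 := mul_inv_cancel₀ (hD' i)
    by_cases hp : 0 < lam i
    · rw [if_pos hp, if_neg (not_not_intro hp)]
      calc z i ^ lam i * (1 - c * (z i)⁻¹) * (1 - d * (z i)⁻¹) *
            ((1 - z i ^ 2) / ((1 - a * z i) * (1 - b * z i) * (1 - c * z i) * (1 - d * z i) *
              (1 - c * (z i)⁻¹) * (1 - d * (z i)⁻¹)))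
          = z i ^ lam i *
              ((1 - z i ^ 2) * (1 - a * z i)⁻¹ * (1 - b * z i)⁻¹ * (1 - c * z i)⁻¹ *
                (1 - d * z i)⁻¹) *
              (((1 - c * (z i)⁻¹) * (1 - c * (z i)⁻¹)⁻¹) *
                ((1 - d * (z i)⁻¹) * (1 - d * (z i)⁻¹)⁻¹)) := by
            rw [div_eq_mul_inv, mul_inv, mul_inv, mul_inv, mul_inv, mul_inv]
            ring
        _ = z i ^ lam i *
              ((1 - z i ^ 2) * (1 - a * z i)⁻¹ * (1 - b * z i)⁻¹ * (1 - c * z i)⁻¹ *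
                (1 - d * z i)⁻¹) * 1 := by rw [e1, e2, one_mul]
    · rw [if_neg hp, if_pos hp]
      have hlam0 : lam i = 0 := le_antisymm (not_lt.mp hp) (hlam.1 i)
      rw [hlam0, zpow_zero]
      rw [div_eq_mul_inv, mul_inv, mul_inv, mul_inv, mul_inv, mul_inv]
      ring
  have hEp : Epoly n lam c d z = ∏ i : Fin n, (if 0 < lam i then
      z i ^ lam i * (1 - c * (z i)⁻¹) * (1 - d * (z i)⁻¹) else 1) :=
    Finset.prod_filter _ _
  have hG2 : (∏ i ∈ Finset.univ.filter (fun i : Fin n => ¬ 0 < lam i),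
      (1 - c * (z i)⁻¹)⁻¹ * (1 - d * (z i)⁻¹)⁻¹) =
      ∏ i : Fin n, (if ¬ 0 < lam i then (1 - c * (z i)⁻¹)⁻¹ * (1 - d * (z i)⁻¹)⁻¹ else 1) :=
    Finset.prod_filter _ _
  have hM : M (fun i => -(μ i - lam i)) θ =
      (∏ i : Fin n, z i ^ lam i) * ∏ i : Fin n, z i ^ (-μ i) := by
    rw [M, ← Finset.prod_mul_distrib]
    apply Finset.prod_congr rfl
    intro i _
    rw [← zpow_add₀ (hz i)]
    congr 1
    ring
  have hmain : (∏ i : Fin n, (if 0 < lam i then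
        z i ^ lam i * (1 - c * (z i)⁻¹) * (1 - d * (z i)⁻¹) else 1)) *
      (∏ i : Fin n, (1 - z i ^ 2) / ((1 - a * z i) * (1 - b * z i) * (1 - c * z i) *
        (1 - d * z i) * (1 - c * (z i)⁻¹) * (1 - d * (z i)⁻¹))) =
      (∏ i : Fin n, z i ^ lam i) *
      (∏ i : Fin n, (1 - z i ^ 2) * (1 - a * z i)⁻¹ * (1 - b * z i)⁻¹ * (1 - c * z i)⁻¹ *
        (1 - d * z i)⁻¹) *
      (∏ i : Fin n, (if ¬ 0 < lam i then (1 - c * (z i)⁻¹)⁻¹ * (1 - d * (z i)⁻¹)⁻¹ else 1)) := by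
    rw [← Finset.prod_mul_distrib, Finset.prod_congr rfl (fun i _ => key i),
      Finset.prod_mul_distrib, Finset.prod_mul_distrib]
  have hnsd : nsDensity n t a b c d z =
      (∏ i : Fin n, (1 - z i ^ 2) /
        ((1 - a * z i) * (1 - b * z i) * (1 - c * z i) * (1 - d * z i) *
          (1 - c * (z i)⁻¹) * (1 - d * (z i)⁻¹))) *
      ∏ i : Fin n, ∏ j : Fin n, if i < j then
        ((1 - z i * z j) * (1 - z i * (z j)⁻¹)) /
          ((1 - t * z i * z j) * (1 - t * z i * (z j)⁻¹)) else 1 := rfl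
  have hGf : Gfun lam a b c d t θ =
      (∏ i : Fin n, (1 - z i ^ 2) * (1 - a * z i)⁻¹ * (1 - b * z i)⁻¹ *
        (1 - c * z i)⁻¹ * (1 - d * z i)⁻¹) *
      (∏ i ∈ Finset.univ.filter (fun i : Fin n => ¬ 0 < lam i),
        (1 - c * (z i)⁻¹)⁻¹ * (1 - d * (z i)⁻¹)⁻¹) *
      ∏ i : Fin n, ∏ j : Fin n, if i < j then
        ((1 - z i * z j) * (1 - z i * (z j)⁻¹)) /
          ((1 - t * z i * z j) * (1 - t * z i * (z j)⁻¹)) else 1 := rfl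
  rw [hnsd, hGf, hEp, hG2, hM]
  generalize hP1 : (∏ i : Fin n, (if 0 < lam i then
      z i ^ lam i * (1 - c * (z i)⁻¹) * (1 - d * (z i)⁻¹) else 1)) = P1 at hmain ⊢
  generalize hPX : (∏ i : Fin n, (1 - z i ^ 2) / ((1 - a * z i) * (1 - b * z i) *
      (1 - c * z i) * (1 - d * z i) * (1 - c * (z i)⁻¹) * (1 - d * (z i)⁻¹))) = PX at hmain ⊢
  generalize hPl : (∏ i : Fin n, z i ^ lam i) = Pl at hmain ⊢
  generalize hPY : (∏ i : Fin n, (1 - z i ^ 2) * (1 - a * z i)⁻¹ * (1 - b * z i)⁻¹ *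
      (1 - c * z i)⁻¹ * (1 - d * z i)⁻¹) = PY at hmain ⊢
  generalize hPW : (∏ i : Fin n, (if ¬ 0 < lam i then
      (1 - c * (z i)⁻¹)⁻¹ * (1 - d * (z i)⁻¹)⁻¹ else 1)) = PW at hmain ⊢
  generalize hPμ : (∏ i : Fin n, z i ^ (-μ i)) = Pm
  generalize hCr : (∏ i : Fin n, ∏ j : Fin n, if i < j then
      ((1 - z i * z j) * (1 - z i * (z j)⁻¹)) /
        ((1 - t * z i * z j) * (1 - t * z i * (z j)⁻¹)) else 1) = Cr
  linear_combination (Pm * Cr) * hmain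

end EOrth

/-- Orthogonality: for a partition `λ` and a composition `μ ≺ λ`,
`⟨E_λ^{(n)}(z;c,d), z^μ⟩₀ = ∫_T E_λ^{(n)} z^{−μ} Δ_K^{(n)} dT = 0`. -/
theorem E_orthogonality (n : ℕ) (lam μ : Fin n → ℤ)
    (hlam : isPartition lam) (hprec : precOrd μ lam) (a b c d t : ℂ)
    (ha : ‖a‖ < 1) (hb : ‖b‖ < 1) (hc : ‖c‖ < 1) (hd : ‖d‖ < 1) (ht : ‖t‖ < 1) :
    torusInt n (fun z =>
      Epoly n lam c d z * (∏ i : Fin n, z i ^ (-μ i)) * nsDensity n t a b c d z) = 0 := by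
  classical
  have hκ : (fun i => μ i - lam i) ∉ EOrth.Sset lam := EOrth.not_mem_Sset lam μ hlam hprec
  have hG : EOrth.Good lam (EOrth.Gfun lam a b c d t) :=
    EOrth.good_Gfun lam a b c d t hlam ha hb hc hd ht
  have h0 := hG.coefZero (fun i => μ i - lam i) hκ
  have heq : (fun θ : Fin n → ℝ =>
      (fun z => Epoly n lam c d z * (∏ i : Fin n, z i ^ (-μ i)) * nsDensity n t a b c d z)
        (fun i => Complex.exp (Complex.I * θ i))) =
      fun θ => EOrth.Gfun lam a b c d t θ *
        EOrth.M (fun i => -((fun j => μ j - lam j) i)) θ := by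
    funext θ
    show Epoly n lam c d (EOrth.zf θ) * (∏ i : Fin n, EOrth.zf θ i ^ (-μ i)) *
        nsDensity n t a b c d (EOrth.zf θ) = _
    rw [EOrth.integrand_eq lam μ hlam a b c d t ha hb hc hd ht θ]
  show ((2 * Real.pi : ℂ))⁻¹ ^ n *
      (∫ θ in EOrth.box n,
        (fun z => Epoly n lam c d z * (∏ i : Fin n, z i ^ (-μ i)) * nsDensity n t a b c d z)
          (fun i => Complex.exp (Complex.I * θ i))) = 0
  rw [show (fun θ : Fin n → ℝ =>
      (fun z => Epoly n lam c d z * (∏ i : Fin n, z i ^ (-μ i)) * nsDensity n t a b c d z)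
        (fun i => Complex.exp (Complex.I * θ i))) =
      fun θ => EOrth.Gfun lam a b c d t θ *
        EOrth.M (fun i => -((fun j => μ j - lam j) i)) θ from heq]
  rw [h0, mul_zero]
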